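/- Full soundness of the logic of clandestine operations: for any state w of a clandestine game and any set X of formulas, if w ⊨ χ for all χ ∈ X and X ⊢ φ, then w ⊨ φ. -/

import Mathlib

/-- Formulas of the logic of clandestine operations: propositional variables,
falsum, negation, implication, distributed knowledge `know C φ` and
clandestine power `how C φ` for coalitions `C ⊆ Ag`. -/
inductive Formula (α : Type) (Ag : Type) : Type
  | var  : α → Formula α Ag
  | bot  : Formula α Ag
  | neg  : Formula α Ag → Formula α Ag
  | imp  : Formula α Ag → Formula α Ag → Formula α Ag
  | know : Set Ag → Formula α Ag → Formula α Ag
  | how  : Set Ag → Formula α Ag → Formula α Ag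

namespace Formula

/-- Defined disjunction. -/
def or {α Ag : Type} (φ ψ : Formula α Ag) : Formula α Ag := imp (neg φ) ψ

/-- Defined verum. -/
def top {α Ag : Type} : Formula α Ag := neg bot

/-- Boolean evaluation treating variables and modal formulas as atoms. -/
def eval {α Ag : Type} (v : Formula α Ag → Bool) : Formula α Ag → Bool
  | var p => v (var p)
  | bot => false
  | neg φ => !(eval v φ)
  | imp φ ψ => !(eval v φ) || eval v ψ
  | know C φ => v (know C φ)
  | how C φ => v (how C φ)

end Formula

/-- A propositional tautology: true under every Boolean valuation of its
atoms (variables and modal subformulas). -/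
def Tautology {α Ag : Type} (φ : Formula α Ag) : Prop :=
  ∀ v, φ.eval v = true

/-- Theorems of the logic of clandestine operations. -/
inductive Prov {α Ag : Type} : Formula α Ag → Prop
  | taut {φ} : Tautology φ → Prov φ
  | truth (C : Set Ag) (φ) : Prov (.imp (.know C φ) φ)
  | negIntro (C : Set Ag) (φ) :
      Prov (.imp (.neg (.know C φ)) (.know C (.neg (.know C φ))))
  | distrib (C : Set Ag) (φ ψ) :
      Prov (.imp (.know C (.imp φ ψ)) (.imp (.know C φ) (.know C ψ)))
  | mono {C' C : Set Ag} (φ) : C' ⊆ C → Prov (.imp (.know C' φ) (.know C φ))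
  | stratIntro (C : Set Ag) (φ) : Prov (.imp (.how C φ) (.know C (.how C φ)))
  | cia {C I A : Set Ag} (φ ψ) : C ∩ (I ∪ A) = ∅ →
      Prov (.imp
        (.know (C ∪ I) (.know (A ∪ I) (.imp (.know C φ) (.know (C ∪ I) ψ))))
        (.imp (.how C φ) (.how (C ∪ I) ψ)))
  | nonterm (C : Set Ag) : Prov (.neg (.how C .bot))
  | emptyCoal (φ : Formula α Ag) : Prov (.neg (.how ∅ φ))
  | mp {φ ψ} : Prov (.imp φ ψ) → Prov φ → Prov ψ
  | necK (C : Set Ag) {φ} : Prov φ → Prov (.know C φ)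
  | necH {C : Set Ag} {φ} : C ≠ ∅ → Prov φ → Prov (.how C φ)

/-- Derivability from a set of hypotheses `X`: from theorems of the system
and members of `X` using Modus Ponens only. -/
inductive ProvFrom {α Ag : Type} (X : Set (Formula α Ag)) : Formula α Ag → Prop
  | hyp {φ} : φ ∈ X → ProvFrom X φ
  | thm {φ} : Prov φ → ProvFrom X φ
  | mp {φ ψ} : ProvFrom X (.imp φ ψ) → ProvFrom X φ → ProvFrom X ψ

/-- A set of formulas is consistent if falsum is not derivable from it. -/
def Consistent {α Ag : Type} (X : Set (Formula α Ag)) : Prop :=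
  ¬ ProvFrom X .bot

/-- Maximal consistent set of formulas. -/
def MCS {α Ag : Type} (X : Set (Formula α Ag)) : Prop :=
  Consistent X ∧ ∀ φ : Formula α Ag, φ ∈ X ∨ .neg φ ∈ X

/-- A clandestine game. -/
structure Game (α Ag : Type) where
  W : Type
  sim : Ag → W → W → Prop
  sim_equiv : ∀ a, Equivalence (sim a)
  Δ : Type
  Δ_nonempty : Nonempty Δ
  M : W → Set Ag → Δ → W → Prop
  concealment : ∀ w C δ u, M w C δ u → ∀ a ∉ C, sim a w u
  nonterm : ∀ w C δ, ∃ u, M w C δ u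
  π : α → Set W

/-- Coalition indistinguishability: `w ∼_C u` iff `w ∼_a u` for all `a ∈ C`. -/
def Game.simC {α Ag : Type} (G : Game α Ag) (C : Set Ag) (w u : G.W) : Prop :=
  ∀ a ∈ C, G.sim a w u

/-- Satisfaction relation for clandestine games. -/
def Game.Sat {α Ag : Type} (G : Game α Ag) : G.W → Formula α Ag → Prop
  | w, .var p => w ∈ G.π p
  | _, .bot => False
  | w, .neg φ => ¬ G.Sat w φ
  | w, .imp φ ψ => G.Sat w φ → G.Sat w ψ
  | w, .know C φ => ∀ u, G.simC C w u → G.Sat u φ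
  | w, .how C φ => ∃ C', C' ⊆ C ∧ C'.Nonempty ∧ ∃ δ : G.Δ,
      ∀ w' u u', G.simC C w w' → G.M w' C' δ u → G.simC C u u' → G.Sat u' φ


section Aux
open Classical
attribute [local instance] Classical.propDecidable

variable {α Ag : Type} (G : Game α Ag)

lemma simC_refl (C : Set Ag) (w : G.W) : G.simC C w w :=
  fun a _ => (G.sim_equiv a).refl w

lemma simC_symm {C : Set Ag} {w u : G.W} (h : G.simC C w u) : G.simC C u w :=
  fun a ha => (G.sim_equiv a).symm (h a ha)

lemma simC_trans {C : Set Ag} {w u v : G.W} (h : G.simC C w u)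
    (h' : G.simC C u v) : G.simC C w v :=
  fun a ha => (G.sim_equiv a).trans (h a ha) (h' a ha)

lemma simC_mono {C' C : Set Ag} (hsub : C' ⊆ C) {w u : G.W}
    (h : G.simC C w u) : G.simC C' w u :=
  fun a ha => h a (hsub ha)

lemma sat_iff_eval (w : G.W) (φ : Formula α Ag) :
    G.Sat w φ ↔ Formula.eval (fun ψ => decide (G.Sat w ψ)) φ = true := by
  induction φ with
  | var p =>
      simp only [Game.Sat, Formula.eval]
      exact ⟨fun h => decide_eq_true h, of_decide_eq_true⟩
  | bot => simp [Game.Sat, Formula.eval]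
  | neg φ ih => simp [Game.Sat, Formula.eval, ih]
  | imp φ ψ ih1 ih2 =>
      simp only [Game.Sat, Formula.eval, Bool.or_eq_true, Bool.not_eq_true']
      constructor
      · intro h
        by_cases hφ : G.Sat w φ
        · exact Or.inr (ih2.mp (h hφ))
        · exact Or.inl (by simpa [ih1] using hφ)
      · rintro (h | h) hφ
        · exact absurd (ih1.mp hφ) (by simp [h])
        · exact ih2.mpr h
  | know C φ ih => simp [Formula.eval]
  | how C φ ih => simp [Formula.eval]

lemma sat_of_prov {φ : Formula α Ag} (h : Prov φ) (w : G.W) : G.Sat w φ := by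
  induction h generalizing w with
  | taut ht =>
      rename_i φ
      exact (sat_iff_eval G w φ).mpr (ht _)
  | truth C φ =>
      intro h
      exact h w (simC_refl G C w)
  | negIntro C φ =>
      intro h u hwu hu
      exact h (fun u' hu' => hu u' (simC_trans G (simC_symm G hwu) hu'))
  | distrib C φ ψ =>
      intro h1 h2 u hu
      exact h1 u hu (h2 u hu)
  | mono φ hsub =>
      intro h u hu
      exact h u (simC_mono G hsub hu)
  | stratIntro C φ =>
      rintro ⟨C', hsub, hne, δ, hδ⟩ v hwv
      exact ⟨C', hsub, hne, δ, fun w' u u' hvw' hM huu' =>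
        hδ w' u u' (simC_trans G hwv hvw') hM huu'⟩
  | cia φ ψ hdisj =>
      rename_i C I A
      intro hK
      rintro ⟨C', hsub, hne, δ, hδ⟩
      refine ⟨C', hsub.trans Set.subset_union_left, hne, δ, ?_⟩
      intro w' u u' hww' hM huu'
      -- w' ⊨ K_{A∪I} (K_C φ → K_{C∪I} ψ)
      have h1 := hK w' hww'
      -- w' ∼_{A∪I} u by concealment (agents in A∪I are not in C')
      have hw'u : G.simC (A ∪ I) w' u := by
        intro a ha
        apply G.concealment w' C' δ u hM
        intro haC'
        have haC : a ∈ C := hsub haC'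
        have : a ∈ C ∩ (I ∪ A) := ⟨haC, ha.elim Or.inr Or.inl⟩
        simp [hdisj] at this
      have h2 := h1 u hw'u
      -- u ⊨ K_C φ
      have h3 : G.Sat u (.know C φ) := by
        intro v huv
        exact hδ w' u v (simC_mono G Set.subset_union_left hww') hM huv
      exact h2 h3 u' huu'
  | nonterm C =>
      rintro ⟨C', hsub, hne, δ, hδ⟩
      obtain ⟨u, hu⟩ := G.nonterm w C' δ
      exact hδ w u u (simC_refl G C w) hu (simC_refl G C u)
  | emptyCoal φ =>
      rintro ⟨C', hsub, hne, _⟩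
      exact hne.ne_empty (Set.subset_eq_empty hsub rfl)
  | mp h1 h2 ih1 ih2 =>
      exact ih1 w (ih2 w)
  | necK C h ih =>
      intro u _
      exact ih u
  | necH hne h ih =>
      obtain ⟨δ⟩ := G.Δ_nonempty
      exact ⟨_, subset_rfl, Set.nonempty_iff_ne_empty.mpr hne, δ,
        fun w' u u' _ _ _ => ih u'⟩

end Aux

/-- Full soundness: if `w ⊨ χ` for all `χ ∈ X` and `X ⊢ φ`, then `w ⊨ φ`. -/
theorem soundness {α Ag : Type} (G : Game α Ag) (w : G.W)
    {X : Set (Formula α Ag)} {φ : Formula α Ag}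
    (hX : ∀ χ ∈ X, G.Sat w χ) (h : ProvFrom X φ) : G.Sat w φ := by
  induction h with
  | hyp hmem => exact hX _ hmem
  | thm hp => exact sat_of_prov G hp w
  | mp h1 h2 ih1 ih2 => exact ih1 ih2
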